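/- Let F^L ⊆ π₋₀(F̂ ∩ G) and suppose (x, y, w) attains the infimum δ^L of the relaxed problem minimizing Σ_i g_i(x, y_i) − w over (x, y, w) with (x, y) ∈ F̂ ∩ G, w ∈ ℝ, and w ≤ Σ_i g_i(x, y_i') for all y' ∈ F^L. If additionally w ≤ g^N(x), then (x, y, w) is feasible for problem (MND), it attains the infimum of (MND), and δ^N = δ^L. (This certifies correctness of the termination test in the constraint-generation algorithm.) -/

import Mathlib

/-!
Statement 13: correctness of the termination test of the constraint-generation
algorithm. If (x,y,w) attains the infimum δ^L of the relaxed problem and w ≤ g^N(x),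
then (x,y,w) is feasible for (MND), attains its infimum, and δ^N = δ^L.
-/

theorem termination_test_correct
    (n₀ m : ℕ) (n : Fin m → ℕ)
    (F : ∀ i : Fin m, Set ((Fin n₀ → ℝ) × (Fin (n i) → ℝ)))
    (g : ∀ i : Fin m, (Fin n₀ → ℝ) → (Fin (n i) → ℝ) → ℝ)
    (G : Set ((Fin n₀ → ℝ) × (∀ i, Fin (n i) → ℝ)))
    (Fhat : Set ((Fin n₀ → ℝ) × (∀ i, Fin (n i) → ℝ)))
    (hFhat : Fhat = {p | ∀ i, (p.1, p.2 i) ∈ F i})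
    (gN : (Fin n₀ → ℝ) → EReal)
    (hgN : ∀ x, gN x =
      ⨅ y' : {y' : ∀ i, Fin (n i) → ℝ // ∃ x', (x', y') ∈ Fhat ∩ G},
        ((∑ i, g i x (y'.1 i) : ℝ) : EReal))
    -- F^L ⊆ π₋₀(F̂ ∩ G)
    (FL : Set (∀ i, Fin (n i) → ℝ))
    (hFL : FL ⊆ {y' | ∃ x', (x', y') ∈ Fhat ∩ G})
    -- feasible sets of (MND) and of the relaxed problem, shared objective
    (MNDfeas : Set (((Fin n₀ → ℝ) × (∀ i, Fin (n i) → ℝ)) × ℝ))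
    (hMNDfeas : MNDfeas = {q | q.1 ∈ Fhat ∩ G ∧
      ∀ y' : ∀ i, Fin (n i) → ℝ, (∃ x', (x', y') ∈ Fhat ∩ G) →
        q.2 ≤ ∑ i, g i q.1.1 (y' i)})
    (Rfeas : Set (((Fin n₀ → ℝ) × (∀ i, Fin (n i) → ℝ)) × ℝ))
    (hRfeas : Rfeas = {q | q.1 ∈ Fhat ∩ G ∧
      ∀ y' ∈ FL, q.2 ≤ ∑ i, g i q.1.1 (y' i)})
    (obj : (((Fin n₀ → ℝ) × (∀ i, Fin (n i) → ℝ)) × ℝ) → EReal)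
    (hobj : ∀ q, obj q = (((∑ i, g i q.1.1 (q.1.2 i)) - q.2 : ℝ) : EReal))
    (δN δL : EReal)
    (hδN : δN = sInf (obj '' MNDfeas))
    (hδL : δL = sInf (obj '' Rfeas))
    -- (x,y,w) attains the infimum of the relaxed problem
    (q : ((Fin n₀ → ℝ) × (∀ i, Fin (n i) → ℝ)) × ℝ)
    (hq : q ∈ Rfeas)
    (hqopt : obj q = δL)
    -- termination test: w ≤ g^N(x)
    (hterm : ((q.2 : ℝ) : EReal) ≤ gN q.1.1) :
    q ∈ MNDfeas ∧ obj q = δN ∧ δN = δL := by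
  have hmem : q ∈ MNDfeas := by
    rw [hMNDfeas]
    refine ⟨(hRfeas ▸ hq).1, fun y' hy' => ?_⟩
    have h1 : gN q.1.1 ≤ ((∑ i, g i q.1.1 (y' i) : ℝ) : EReal) := by
      rw [hgN]
      exact iInf_le _ (⟨y', hy'⟩ : {y' : ∀ i, Fin (n i) → ℝ // ∃ x', (x', y') ∈ Fhat ∩ G})
    exact_mod_cast hterm.trans h1
  have hsub : MNDfeas ⊆ Rfeas := by
    rw [hMNDfeas, hRfeas]
    intro r hr
    exact ⟨hr.1, fun y' hy' => hr.2 y' (hFL hy')⟩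
  have hδLN : δL ≤ δN := by
    rw [hδL, hδN]
    exact sInf_le_sInf (Set.image_mono hsub)
  have hδNq : δN ≤ obj q := by
    rw [hδN]
    exact sInf_le ⟨q, hmem, rfl⟩
  have heq : obj q = δN := le_antisymm (hqopt ▸ hδLN) hδNq
  exact ⟨hmem, heq, heq ▸ hqopt⟩
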